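/- arXiv:2407.06386 — 5 statements merged into one kernel-verified Lean document; each statement's English description precedes it below -/
import Mathlib

section
/- Let h : ℝ≥0 × ℝ≥0 → ℝ be measurable with |h(s,a)| ≤ M for all (s,a). Then for every n ≥ 0 and all t, x ≥ 0 one has |Jₙh(t,x)| ≤ (M·t·x)ⁿ / (n!)². Consequently the series Σ_{n=0}^∞ Jₙh(t,x) converges absolutely for every (t,x). -/
open MeasureTheory intervalIntegral

/-- The iterated Volterra operators `Jₙh` on the nonnegative quadrant:
`J₀h(t,x) = 1` and `J_{n+1}h(t,x) = ∫₀ᵗ∫₀ˣ h(s,a) · Jₙh(s,a) da ds`. -/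
noncomputable def J (h : ℝ × ℝ → ℝ) : ℕ → ℝ × ℝ → ℝ
  | 0 => fun _ => 1
  | n + 1 => fun p => ∫ s in (0:ℝ)..p.1, ∫ a in (0:ℝ)..p.2, h (s, a) * J h n (s, a)

lemma mpi_key {g : (ℝ × ℝ) × ℝ → ℝ} (hg : Measurable g) :
    Measurable fun p : ℝ × ℝ => ∫ u, g (p, u) :=
  (hg.stronglyMeasurable.integral_prod_right').measurable

/-- A parametrized interval integral (endpoint in the first coordinate) of a jointly
measurable function is jointly measurable. -/
lemma mpi1 {f : ℝ × ℝ → ℝ} (hf : Measurable f) :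
    Measurable fun p : ℝ × ℝ => ∫ u in (0:ℝ)..p.1, f (u, p.2) := by
  have h1 : Measurable fun q : (ℝ × ℝ) × ℝ =>
      (Set.Ioc (0:ℝ) q.1.1).indicator (fun u => f (u, q.1.2)) q.2 := by
    have e1 : ∀ q : (ℝ × ℝ) × ℝ, (Set.Ioc (0:ℝ) q.1.1).indicator (fun u => f (u, q.1.2)) q.2
        = if 0 < q.2 ∧ q.2 ≤ q.1.1 then f (q.2, q.1.2) else 0 := by
      intro q; simp [Set.indicator, Set.mem_Ioc]
    simp_rw [e1]
    refine Measurable.ite ?_ (hf.comp (by fun_prop)) measurable_const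
    exact MeasurableSet.inter
      (measurableSet_lt measurable_const measurable_snd)
      (measurableSet_le measurable_snd (measurable_fst.comp measurable_fst))
  have h2 : Measurable fun q : (ℝ × ℝ) × ℝ =>
      (Set.Ioc q.1.1 (0:ℝ)).indicator (fun u => f (u, q.1.2)) q.2 := by
    have e2 : ∀ q : (ℝ × ℝ) × ℝ, (Set.Ioc q.1.1 (0:ℝ)).indicator (fun u => f (u, q.1.2)) q.2
        = if q.1.1 < q.2 ∧ q.2 ≤ 0 then f (q.2, q.1.2) else 0 := by
      intro q; simp [Set.indicator, Set.mem_Ioc]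
    simp_rw [e2]
    refine Measurable.ite ?_ (hf.comp (by fun_prop)) measurable_const
    exact MeasurableSet.inter
      (measurableSet_lt (measurable_fst.comp measurable_fst) measurable_snd)
      (measurableSet_le measurable_snd measurable_const)
  have e : ∀ p : ℝ × ℝ, (∫ u in (0:ℝ)..p.1, f (u, p.2)) =
      (∫ u, (Set.Ioc (0:ℝ) p.1).indicator (fun u => f (u, p.2)) u) -
      (∫ u, (Set.Ioc p.1 (0:ℝ)).indicator (fun u => f (u, p.2)) u) := by
    intro p
    rw [intervalIntegral, MeasureTheory.integral_indicator measurableSet_Ioc,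
      MeasureTheory.integral_indicator measurableSet_Ioc]
  simp_rw [e]
  exact (mpi_key h1).sub (mpi_key h2)

/-- A parametrized interval integral (endpoint in the second coordinate) of a jointly
measurable function is jointly measurable. -/
lemma mpi2 {f : ℝ × ℝ → ℝ} (hf : Measurable f) :
    Measurable fun p : ℝ × ℝ => ∫ u in (0:ℝ)..p.2, f (p.1, u) := by
  have h1 : Measurable fun q : (ℝ × ℝ) × ℝ =>
      (Set.Ioc (0:ℝ) q.1.2).indicator (fun u => f (q.1.1, u)) q.2 := by
    have e1 : ∀ q : (ℝ × ℝ) × ℝ, (Set.Ioc (0:ℝ) q.1.2).indicator (fun u => f (q.1.1, u)) q.2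
        = if 0 < q.2 ∧ q.2 ≤ q.1.2 then f (q.1.1, q.2) else 0 := by
      intro q; simp [Set.indicator, Set.mem_Ioc]
    simp_rw [e1]
    refine Measurable.ite ?_ (hf.comp (by fun_prop)) measurable_const
    exact MeasurableSet.inter
      (measurableSet_lt measurable_const measurable_snd)
      (measurableSet_le measurable_snd (measurable_snd.comp measurable_fst))
  have h2 : Measurable fun q : (ℝ × ℝ) × ℝ =>
      (Set.Ioc q.1.2 (0:ℝ)).indicator (fun u => f (q.1.1, u)) q.2 := by
    have e2 : ∀ q : (ℝ × ℝ) × ℝ, (Set.Ioc q.1.2 (0:ℝ)).indicator (fun u => f (q.1.1, u)) q.2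
        = if q.1.2 < q.2 ∧ q.2 ≤ 0 then f (q.1.1, q.2) else 0 := by
      intro q; simp [Set.indicator, Set.mem_Ioc]
    simp_rw [e2]
    refine Measurable.ite ?_ (hf.comp (by fun_prop)) measurable_const
    exact MeasurableSet.inter
      (measurableSet_lt (measurable_snd.comp measurable_fst) measurable_snd)
      (measurableSet_le measurable_snd measurable_const)
  have e : ∀ p : ℝ × ℝ, (∫ u in (0:ℝ)..p.2, f (p.1, u)) =
      (∫ u, (Set.Ioc (0:ℝ) p.2).indicator (fun u => f (p.1, u)) u) -
      (∫ u, (Set.Ioc p.2 (0:ℝ)).indicator (fun u => f (p.1, u)) u) := by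
    intro p
    rw [intervalIntegral, MeasureTheory.integral_indicator measurableSet_Ioc,
      MeasureTheory.integral_indicator measurableSet_Ioc]
  simp_rw [e]
  exact (mpi_key h1).sub (mpi_key h2)

/-- For bounded measurable `h`, one has `|Jₙh(t,x)| ≤ (M·t·x)ⁿ / (n!)²` for all `n` and
all `t,x ≥ 0`, and consequently the series `Σₙ Jₙh(t,x)` converges absolutely. -/
theorem volterra_iterates_bound
    (h : ℝ × ℝ → ℝ) (M : ℝ) (hmeas : Measurable h)
    (hbd : ∀ s a : ℝ, 0 ≤ s → 0 ≤ a → |h (s, a)| ≤ M) :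
    ∀ t x : ℝ, 0 ≤ t → 0 ≤ x →
      (∀ n : ℕ, |J h n (t, x)| ≤ (M * t * x) ^ n / (n.factorial : ℝ) ^ 2) ∧
      Summable (fun n : ℕ => |J h n (t, x)|) := by
  have hM : 0 ≤ M := (abs_nonneg _).trans (hbd 0 0 le_rfl le_rfl)
  -- measurability of each J h n
  have measJ : ∀ n, Measurable (J h n) := by
    intro n
    induction n with
    | zero => exact measurable_const
    | succ n ih =>
      show Measurable fun p : ℝ × ℝ =>
        ∫ s in (0:ℝ)..p.1, ∫ a in (0:ℝ)..p.2, h (s, a) * J h n (s, a)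
      have hG : Measurable fun r : ℝ × ℝ => ∫ a in (0:ℝ)..r.2, h (r.1, a) * J h n (r.1, a) :=
        mpi2 (hmeas.mul ih)
      exact mpi1 hG
  -- the main pointwise bound, proved for all (t,x) simultaneously by induction on n
  have main : ∀ n, ∀ t x : ℝ, 0 ≤ t → 0 ≤ x →
      |J h n (t, x)| ≤ (M * t * x) ^ n / (n.factorial : ℝ) ^ 2 := by
    intro n
    induction n with
    | zero => intro t x _ _; simp [J]
    | succ n ih =>
      intro t x ht hx
      have hfact : (0:ℝ) < (n.factorial : ℝ) := by positivity
      set C : ℝ := M ^ (n + 1) / (n.factorial : ℝ) ^ 2 with hC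
      have hCpos : 0 ≤ C := by positivity
      -- bound on the inner integral for s ∈ (0, t]
      have inner_bd : ∀ s : ℝ, 0 ≤ s →
          |∫ a in (0:ℝ)..x, h (s, a) * J h n (s, a)| ≤ C * s ^ n * (x ^ (n + 1) / (n + 1)) := by
        intro s hs
        have hb : ∀ᵐ a ∂(volume.restrict (Set.uIoc (0:ℝ) x)),
            ‖h (s, a) * J h n (s, a)‖ ≤ C * s ^ n * a ^ n := by
          refine (ae_restrict_iff' measurableSet_uIoc).2 (Filter.Eventually.of_forall ?_)
          intro a ha
          rw [Set.uIoc_of_le hx] at ha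
          have ha0 : 0 ≤ a := le_of_lt ha.1
          have hihsa := ih s a hs ha0
          calc ‖h (s, a) * J h n (s, a)‖ = |h (s, a)| * |J h n (s, a)| := abs_mul _ _
            _ ≤ M * ((M * s * a) ^ n / (n.factorial : ℝ) ^ 2) := by
                apply mul_le_mul (hbd s a hs ha0) hihsa (abs_nonneg _) hM
            _ = C * s ^ n * a ^ n := by
                rw [hC]; ring
        have hbint : IntervalIntegrable (fun a => C * s ^ n * a ^ n) volume 0 x :=
          (continuous_const.mul (continuous_pow n)).intervalIntegrable _ _
        have hkey := intervalIntegral.norm_integral_le_abs_of_norm_le hb hbint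
        rw [Real.norm_eq_abs] at hkey
        refine hkey.trans ?_
        rw [intervalIntegral.integral_const_mul, integral_pow]
        rw [zero_pow (Nat.succ_ne_zero n), sub_zero,
          abs_of_nonneg (mul_nonneg (mul_nonneg hCpos (pow_nonneg hs n))
            (div_nonneg (pow_nonneg hx _) (by positivity)))]
      -- bound on the outer integral
      have hb2 : ∀ᵐ s ∂(volume.restrict (Set.uIoc (0:ℝ) t)),
          ‖∫ a in (0:ℝ)..x, h (s, a) * J h n (s, a)‖ ≤
            (C * (x ^ (n + 1) / (n + 1))) * s ^ n := by
        refine (ae_restrict_iff' measurableSet_uIoc).2 (Filter.Eventually.of_forall ?_)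
        intro s hs
        rw [Set.uIoc_of_le ht] at hs
        have hib := inner_bd s (le_of_lt hs.1)
        rw [Real.norm_eq_abs]
        calc |∫ a in (0:ℝ)..x, h (s, a) * J h n (s, a)| ≤ C * s ^ n * (x ^ (n + 1) / (n + 1)) :=
              hib
          _ = (C * (x ^ (n + 1) / (n + 1))) * s ^ n := by ring
      have hbint2 : IntervalIntegrable (fun s => (C * (x ^ (n + 1) / (n + 1))) * s ^ n)
          volume 0 t := (continuous_const.mul (continuous_pow n)).intervalIntegrable _ _
      have key := intervalIntegral.norm_integral_le_abs_of_norm_le hb2 hbint2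
      rw [Real.norm_eq_abs] at key
      have key' : |J h (n + 1) (t, x)| ≤
          |∫ s in (0:ℝ)..t, (C * (x ^ (n + 1) / (n + 1))) * s ^ n| := key
      refine key'.trans ?_
      rw [intervalIntegral.integral_const_mul, integral_pow]
      have hval : (C * (x ^ (n + 1) / (n + 1))) * ((t ^ (n + 1) - 0 ^ (n + 1)) / (n + 1)) =
          (M * t * x) ^ (n + 1) / ((n + 1).factorial : ℝ) ^ 2 := by
        rw [hC]
        have hfs : ((n + 1).factorial : ℝ) = ((n : ℝ) + 1) * (n.factorial : ℝ) := by
          rw [Nat.factorial_succ]; push_cast; ring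
        rw [hfs]
        have hn1 : (0:ℝ) < (n:ℝ) + 1 := by positivity
        field_simp
        ring
      rw [zero_pow (Nat.succ_ne_zero n), sub_zero] at hval ⊢
      rw [abs_of_nonneg (mul_nonneg (mul_nonneg hCpos
        (div_nonneg (pow_nonneg hx _) (by positivity)))
        (div_nonneg (pow_nonneg ht _) (by positivity))), hval]
  intro t x ht hx
  refine ⟨fun n => main n t x ht hx, ?_⟩
  refine Summable.of_nonneg_of_le (fun n => abs_nonneg _)
    (fun n => (main n t x ht hx).trans ?_) (Real.summable_pow_div_factorial (M * t * x))
  have h1 : (1:ℝ) ≤ (n.factorial : ℝ) := by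
    exact_mod_cast Nat.one_le_iff_ne_zero.mpr n.factorial_pos.ne'
  have h2 : (n.factorial : ℝ) ≤ (n.factorial : ℝ) ^ 2 := by nlinarith
  gcongr
end

section
/- Suppose h : ℝ≥0 × ℝ≥0 → ℝ has the separable form h(t,x) = f(t)·g(x), where f, g : ℝ≥0 → ℝ are measurable, bounded functions. Then for every n ≥ 0 and all t, x ≥ 0, the iterated Volterra operator satisfies the closed formula Jₙh(t,x) = (1/(n!)²) · (∫₀ᵗ f(s) ds)ⁿ · (∫₀ˣ g(a) da)ⁿ. -/
open MeasureTheory intervalIntegral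


lemma integrableOn_of_bdd {φ : ℝ → ℝ} {C x : ℝ} (hφ : Measurable φ)
    (h : ∀ b ∈ Set.Ioc (0:ℝ) x, |φ b| ≤ C) : IntegrableOn φ (Set.Ioc 0 x) := by
  haveI : IsFiniteMeasure (volume.restrict (Set.Ioc (0:ℝ) x)) :=
    ⟨by rw [Measure.restrict_apply_univ]; exact measure_Ioc_lt_top⟩
  refine (integrable_const C).mono' hφ.aestronglyMeasurable ?_
  filter_upwards [ae_restrict_mem measurableSet_Ioc] with b hb
  simpa using h b hb

lemma key (g : ℝ → ℝ) (M : ℝ) (hm : Measurable g) (hb : ∀ a, |g a| ≤ M) :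
    ∀ (n : ℕ) (x : ℝ), 0 ≤ x →
    (∫ a in (0:ℝ)..x, g a * (∫ b in (0:ℝ)..a, g b) ^ n)
      = (∫ a in (0:ℝ)..x, g a) ^ (n + 1) / (n + 1) := by
  have hMnn : 0 ≤ M := le_trans (abs_nonneg _) (hb 0)
  have hint : ∀ a b : ℝ, IntervalIntegrable g volume a b := by
    intro a b
    rw [intervalIntegrable_iff]
    haveI : IsFiniteMeasure (volume.restrict (Set.uIoc a b)) :=
      ⟨by rw [Measure.restrict_apply_univ, Set.uIoc]; exact measure_Ioc_lt_top⟩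
    exact (integrable_const M).mono' hm.aestronglyMeasurable
      (Filter.Eventually.of_forall fun s => by simpa using hb s)
  set G : ℝ → ℝ := fun y => ∫ b in (0:ℝ)..y, g b with hG
  have hGcont : Continuous G := intervalIntegral.continuous_primitive hint 0
  have hGbd : ∀ y : ℝ, 0 ≤ y → |G y| ≤ M * y := fun y hy => by
    simpa [abs_of_nonneg hy] using
      intervalIntegral.norm_integral_le_of_norm_le_const (C := M)
        (fun s _ => by simpa using hb s) (a := 0) (b := y) (f := g)
  intro n
  induction n with
  | zero => intro x hx; simp
  | succ n IH =>
    intro x hx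
    haveI fin1 : IsFiniteMeasure (volume.restrict (Set.Ioc (0:ℝ) x)) :=
      ⟨by rw [Measure.restrict_apply_univ]; exact measure_Ioc_lt_top⟩
    set φ : ℝ → ℝ := fun b => g b * G b ^ n with hφ
    have hφmeas : Measurable φ := hm.mul ((hGcont.measurable).pow_const n)
    have hφbd : ∀ b ∈ Set.Ioc (0:ℝ) x, |φ b| ≤ M * (M * x) ^ n := by
      intro b hb'
      have h1 : |G b| ≤ M * x :=
        (hGbd b hb'.1.le).trans (by nlinarith [hb'.2, hb'.1.le])
      calc |φ b| = |g b| * |G b| ^ n := by rw [hφ]; rw [abs_mul, abs_pow]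
        _ ≤ M * (M * x) ^ n :=
            mul_le_mul (hb b) (pow_le_pow_left₀ (abs_nonneg _) h1 n)
              (pow_nonneg (abs_nonneg _) n) hMnn
    have hφint : IntegrableOn φ (Set.Ioc 0 x) := integrableOn_of_bdd hφmeas hφbd
    have hφintab : ∀ a : ℝ, 0 ≤ a → a ≤ x → IntervalIntegrable φ volume 0 a := by
      intro a h0 hax
      rw [intervalIntegrable_iff_integrableOn_Ioc_of_le h0]
      exact hφint.mono_set (Set.Ioc_subset_Ioc le_rfl hax)
    -- step 1 : rewrite using IH
    have step1 : (∫ a in (0:ℝ)..x, g a * G a ^ (n + 1))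
        = ∫ a in (0:ℝ)..x, g a * ((n + 1 : ℝ) * ∫ b in (0:ℝ)..a, φ b) := by
      apply intervalIntegral.integral_congr
      intro a ha
      rw [Set.uIcc_of_le hx] at ha
      show g a * G a ^ (n + 1) = g a * ((↑n + 1) * ∫ b in (0:ℝ)..a, φ b)
      have h2 : G a ^ (n + 1) = (↑n + 1) * ∫ b in (0:ℝ)..a, φ b := by
        have h3 := IH a ha.1
        rw [show (∫ b in (0:ℝ)..a, φ b) = (∫ b in (0:ℝ)..a, g b * G b ^ n) from rfl, h3]
        have hne : ((n : ℝ) + 1) ≠ 0 := by positivity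
        field_simp
        rfl
      rw [h2]
    -- ψ is the integrand of the target
    set ψ : ℝ → ℝ := fun b => g b * G b ^ (n + 1) with hψ
    have hψmeas : Measurable ψ := hm.mul ((hGcont.measurable).pow_const (n + 1))
    have hψbd : ∀ b ∈ Set.Ioc (0:ℝ) x, |ψ b| ≤ M * (M * x) ^ (n + 1) := by
      intro b hb'
      have h1 : |G b| ≤ M * x :=
        (hGbd b hb'.1.le).trans (by nlinarith [hb'.2, hb'.1.le])
      calc |ψ b| = |g b| * |G b| ^ (n + 1) := by rw [hψ]; rw [abs_mul, abs_pow]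
        _ ≤ M * (M * x) ^ (n + 1) :=
            mul_le_mul (hb b) (pow_le_pow_left₀ (abs_nonneg _) h1 (n + 1))
              (pow_nonneg (abs_nonneg _) (n + 1)) hMnn
    have hψint : IntegrableOn ψ (Set.Ioc 0 x) := integrableOn_of_bdd hψmeas hψbd
    -- the Fubini kernel
    set F : ℝ → ℝ → ℝ := fun a b => if b ≤ a then g a * φ b else 0 with hF
    have hFint : Integrable (Function.uncurry F)
        ((volume.restrict (Set.Ioc (0:ℝ) x)).prod (volume.restrict (Set.Ioc (0:ℝ) x))) := by
      have hFmeas : Measurable (Function.uncurry F) := by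
        apply Measurable.ite (measurableSet_le measurable_snd measurable_fst)
        · exact (hm.comp measurable_fst).mul (hφmeas.comp measurable_snd)
        · exact measurable_const
      refine (integrable_const (M * (M * (M * x) ^ n))).mono'
        hFmeas.aestronglyMeasurable ?_
      rw [Measure.prod_restrict]
      filter_upwards [ae_restrict_mem (measurableSet_Ioc.prod measurableSet_Ioc)] with p hp
      obtain ⟨hp1, hp2⟩ := hp
      show |Function.uncurry F p| ≤ M * (M * (M * x) ^ n)
      rcases le_or_gt p.2 p.1 with hle | hlt
      · have : Function.uncurry F p = g p.1 * φ p.2 := if_pos hle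
        rw [this, abs_mul]
        exact mul_le_mul (hb p.1) (hφbd p.2 hp2) (abs_nonneg _) hMnn
      · have : Function.uncurry F p = 0 := if_neg (not_le.mpr hlt)
        rw [this, abs_zero]
        exact mul_nonneg hMnn (mul_nonneg hMnn (pow_nonneg (mul_nonneg hMnn hx) n))
    have hswap := MeasureTheory.integral_integral_swap hFint
    -- inner integral computations
    have inner1 : ∀ a ∈ Set.Ioc (0:ℝ) x,
        (∫ b in Set.Ioc (0:ℝ) x, F a b) = g a * ∫ b in (0:ℝ)..a, φ b := by
      intro a ha
      have heq : (fun b => F a b) = (Set.Iic a).indicator (fun b => g a * φ b) := by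
        funext b
        simp only [hF, Set.indicator_apply, Set.mem_Iic]
      rw [heq, MeasureTheory.setIntegral_indicator measurableSet_Iic]
      have hinter : Set.Ioc (0:ℝ) x ∩ Set.Iic a = Set.Ioc 0 a := by
        rw [Set.Ioc_inter_Iic, min_eq_right ha.2]
      rw [hinter, MeasureTheory.integral_const_mul,
        intervalIntegral.integral_of_le ha.1.le]
    have inner2 : ∀ b ∈ Set.Ioc (0:ℝ) x,
        (∫ a in Set.Ioc (0:ℝ) x, F a b) = G x * φ b - ψ b := by
      intro b hb'
      have heq : (fun a => F a b) = (Set.Ici b).indicator (fun a => g a * φ b) := by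
        funext a
        simp only [hF, Set.indicator_apply, Set.mem_Ici]
      rw [heq, MeasureTheory.setIntegral_indicator measurableSet_Ici]
      have hinter : Set.Ioc (0:ℝ) x ∩ Set.Ici b = Set.Icc b x := by
        ext a
        simp only [Set.mem_inter_iff, Set.mem_Ioc, Set.mem_Ici, Set.mem_Icc]
        constructor
        · rintro ⟨⟨_, h2⟩, h3⟩; exact ⟨h3, h2⟩
        · rintro ⟨h1, h2⟩; exact ⟨⟨lt_of_lt_of_le hb'.1 h1, h2⟩, h1⟩
      rw [hinter, MeasureTheory.integral_mul_const,
        MeasureTheory.integral_Icc_eq_integral_Ioc,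
        ← intervalIntegral.integral_of_le hb'.2,
        ← intervalIntegral.integral_interval_sub_left (hint 0 x) (hint 0 b)]
      show (G x - G b) * φ b = G x * φ b - ψ b
      simp only [hφ, hψ]; ring
    -- assemble
    have hK : (∫ a in (0:ℝ)..x, ψ a)
        = ((n : ℝ) + 1) * (G x * (G x ^ (n + 1) / ((n : ℝ) + 1))
            - ∫ a in (0:ℝ)..x, ψ a) := by
      calc (∫ a in (0:ℝ)..x, ψ a)
          = ∫ a in (0:ℝ)..x, g a * ((n + 1 : ℝ) * ∫ b in (0:ℝ)..a, φ b) := step1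
        _ = ∫ a in (0:ℝ)..x, ((n + 1 : ℝ)) * (g a * ∫ b in (0:ℝ)..a, φ b) := by
            apply intervalIntegral.integral_congr; intro a _; ring
        _ = ((n : ℝ) + 1) * ∫ a in (0:ℝ)..x, g a * ∫ b in (0:ℝ)..a, φ b := by
            rw [intervalIntegral.integral_const_mul]
        _ = ((n : ℝ) + 1) * ∫ a in Set.Ioc (0:ℝ) x, g a * ∫ b in (0:ℝ)..a, φ b := by
            rw [intervalIntegral.integral_of_le hx]
        _ = ((n : ℝ) + 1) * ∫ a in Set.Ioc (0:ℝ) x, ∫ b in Set.Ioc (0:ℝ) x, F a b := by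
            congr 1
            exact (MeasureTheory.setIntegral_congr_fun measurableSet_Ioc
              (fun a ha => (inner1 a ha).symm))
        _ = ((n : ℝ) + 1) * ∫ b in Set.Ioc (0:ℝ) x, ∫ a in Set.Ioc (0:ℝ) x, F a b := by
            rw [hswap]
        _ = ((n : ℝ) + 1) * ∫ b in Set.Ioc (0:ℝ) x, (G x * φ b - ψ b) := by
            congr 1
            exact MeasureTheory.setIntegral_congr_fun measurableSet_Ioc inner2
        _ = ((n : ℝ) + 1) * (G x * (∫ b in Set.Ioc (0:ℝ) x, φ b)
              - ∫ b in Set.Ioc (0:ℝ) x, ψ b) := by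
            rw [MeasureTheory.integral_sub (hφint.const_mul (G x)) hψint,
              MeasureTheory.integral_const_mul]
        _ = ((n : ℝ) + 1) * (G x * (G x ^ (n + 1) / ((n : ℝ) + 1))
              - ∫ a in (0:ℝ)..x, ψ a) := by
            have e1 : (∫ b in Set.Ioc (0:ℝ) x, φ b) = G x ^ (n + 1) / ((n : ℝ) + 1) := by
              rw [← intervalIntegral.integral_of_le hx]; exact IH x hx
            have e2 : (∫ b in Set.Ioc (0:ℝ) x, ψ b) = ∫ a in (0:ℝ)..x, ψ a :=
              (intervalIntegral.integral_of_le hx).symm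
            rw [e1, e2]
    have hne : ((n : ℝ) + 1) ≠ 0 := by positivity
    have hne2 : ((n : ℝ) + 2) ≠ 0 := by positivity
    have h7 : (∫ a in (0:ℝ)..x, ψ a) * ((n : ℝ) + 2) = G x ^ (n + 2) := by
      have h5 : G x * G x ^ (n + 1) = G x ^ (n + 2) := by ring
      field_simp at hK
      nlinarith [hK, h5]
    have hcast : (((n + 1 : ℕ)) : ℝ) + 1 = (n : ℝ) + 2 := by push_cast; ring
    rw [hcast, eq_div_iff hne2,
      show (∫ a in (0:ℝ)..x, g a) = G x from rfl]
    exact h7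

lemma key' (g : ℝ → ℝ) (M : ℝ) (hm : Measurable g) (hb : ∀ a : ℝ, 0 ≤ a → |g a| ≤ M)
    (n : ℕ) (x : ℝ) (hx : 0 ≤ x) :
    (∫ a in (0:ℝ)..x, g a * (∫ b in (0:ℝ)..a, g b) ^ n)
      = (∫ a in (0:ℝ)..x, g a) ^ (n + 1) / (n + 1) := by
  set g' : ℝ → ℝ := fun a => if 0 ≤ a then g a else 0 with hg'
  have hm' : Measurable g' :=
    Measurable.ite (measurableSet_le measurable_const measurable_id) hm measurable_const
  have hb' : ∀ a : ℝ, |g' a| ≤ max M 0 := by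
    intro a
    by_cases h : (0:ℝ) ≤ a
    · rw [hg']; simp only [if_pos h]; exact (hb a h).trans (le_max_left _ _)
    · rw [hg']; simp only [if_neg h, abs_zero]; exact le_max_right _ _
  have hGeq : ∀ y : ℝ, 0 ≤ y → (∫ b in (0:ℝ)..y, g' b) = ∫ b in (0:ℝ)..y, g b := by
    intro y hy
    apply intervalIntegral.integral_congr
    intro b hb2
    rw [Set.uIcc_of_le hy] at hb2
    show g' b = g b
    rw [hg']; simp only [if_pos hb2.1]
  have h1 : (∫ a in (0:ℝ)..x, g' a * (∫ b in (0:ℝ)..a, g' b) ^ n)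
      = ∫ a in (0:ℝ)..x, g a * (∫ b in (0:ℝ)..a, g b) ^ n := by
    apply intervalIntegral.integral_congr
    intro a ha
    rw [Set.uIcc_of_le hx] at ha
    show g' a * (∫ b in (0:ℝ)..a, g' b) ^ n = g a * (∫ b in (0:ℝ)..a, g b) ^ n
    rw [hGeq a ha.1, hg']; simp only [if_pos ha.1]
  rw [← h1, key g' (max M 0) hm' hb' n x hx, hGeq x hx]

/-- If `h(t,x) = f(t)·g(x)` is separable with `f, g` measurable and bounded, then
`Jₙh(t,x) = (1/(n!)²) · (∫₀ᵗ f)ⁿ · (∫₀ˣ g)ⁿ`. -/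
theorem volterra_iterates_separable
    (f g : ℝ → ℝ) (Mf Mg : ℝ)
    (hfmeas : Measurable f) (hgmeas : Measurable g)
    (hfbd : ∀ s : ℝ, 0 ≤ s → |f s| ≤ Mf) (hgbd : ∀ a : ℝ, 0 ≤ a → |g a| ≤ Mg)
    (h : ℝ × ℝ → ℝ) (hsep : ∀ t x : ℝ, h (t, x) = f t * g x) :
    ∀ (n : ℕ) (t x : ℝ), 0 ≤ t → 0 ≤ x →
      J h n (t, x) = (1 / (n.factorial : ℝ) ^ 2)
        * (∫ s in (0:ℝ)..t, f s) ^ n * (∫ a in (0:ℝ)..x, g a) ^ n := by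
  intro n
  induction n with
  | zero => intro t x ht hx; simp [J, Nat.factorial]
  | succ n IH =>
    intro t x ht hx
    have hne : ((n : ℝ) + 1) ≠ 0 := by positivity
    have hfacne : ((n.factorial : ℝ)) ≠ 0 := Nat.cast_ne_zero.mpr n.factorial_ne_zero
    set c : ℝ := 1 / (n.factorial : ℝ) ^ 2 with hc
    set C : ℝ := c * ((∫ a in (0:ℝ)..x, g a) ^ (n + 1) / ((n : ℝ) + 1)) with hC
    have inner : ∀ s ∈ Set.Icc (0:ℝ) t,
        (∫ a in (0:ℝ)..x, h (s, a) * J h n (s, a))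
          = (f s * (∫ b in (0:ℝ)..s, f b) ^ n) * C := by
      intro s hs
      have e : (∫ a in (0:ℝ)..x, h (s, a) * J h n (s, a))
          = ∫ a in (0:ℝ)..x,
              (f s * (∫ b in (0:ℝ)..s, f b) ^ n * c)
                * (g a * (∫ b in (0:ℝ)..a, g b) ^ n) := by
        apply intervalIntegral.integral_congr
        intro a ha
        rw [Set.uIcc_of_le hx] at ha
        show h (s, a) * J h n (s, a) = _
        rw [hsep s a, IH s a hs.1 ha.1]
        ring
      rw [e, intervalIntegral.integral_const_mul,
        key' g Mg hgmeas hgbd n x hx, hC]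
      ring
    have outer : J h (n + 1) (t, x)
        = ∫ s in (0:ℝ)..t, (f s * (∫ b in (0:ℝ)..s, f b) ^ n) * C := by
      show (∫ s in (0:ℝ)..t, ∫ a in (0:ℝ)..x, h (s, a) * J h n (s, a)) = _
      apply intervalIntegral.integral_congr
      intro s hs
      rw [Set.uIcc_of_le ht] at hs
      exact inner s hs
    rw [outer, intervalIntegral.integral_mul_const,
      key' f Mf hfmeas hfbd n t ht, hC, hc]
    have hfac : ((n + 1).factorial : ℝ) = ((n : ℝ) + 1) * (n.factorial : ℝ) := by
      rw [Nat.factorial_succ]; push_cast; ring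
    rw [hfac]
    have e : (1:ℝ) / (((n:ℝ) + 1) * (n.factorial:ℝ)) ^ 2
        = 1 / ((n:ℝ) + 1) * (1 / (n.factorial:ℝ) ^ 2) * (1 / ((n:ℝ) + 1)) := by
      field_simp
    rw [e]
    ring
end

section
/- (Two-parameter Gronwall inequality.) Let T, X > 0, let a ≥ 0 and M ≥ 0, and let v : [0,T] × [0,X] → ℝ be continuous and nonnegative. If v(t,x) ≤ a + M · ∫₀ᵗ∫₀ˣ v(s,α) dα ds for all (t,x) ∈ [0,T] × [0,X], then v(t,x) ≤ a · Σ_{n=0}^∞ (M·t·x)ⁿ / (n!)² for all (t,x) ∈ [0,T] × [0,X]. -/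
open MeasureTheory intervalIntegral

noncomputable def gwF (M : ℝ) (k : ℕ) (t x : ℝ) : ℝ := (M*t*x)^k / (k.factorial : ℝ)^2

lemma gwF_cont (M : ℝ) (k : ℕ) : Continuous (fun p : ℝ × ℝ => gwF M k p.1 p.2) := by
  unfold gwF; fun_prop

lemma gwF_cont1 (M : ℝ) (k : ℕ) (s : ℝ) : Continuous (fun α => gwF M k s α) :=
  (gwF_cont M k).comp (Continuous.prodMk_right s)

lemma gwF_int_inner (M : ℝ) (k : ℕ) (s x : ℝ) :
    IntervalIntegrable (fun α => gwF M k s α) volume 0 x :=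
  (gwF_cont1 M k s).intervalIntegrable 0 x

lemma gwF_contI (M : ℝ) (k : ℕ) (x : ℝ) :
    Continuous (fun s => ∫ α in (0:ℝ)..x, gwF M k s α) :=
  continuous_parametric_intervalIntegral_of_continuous
    (f := fun s α => gwF M k s α) (gwF_cont M k) continuous_const

lemma gw_inner (M : ℝ) (k : ℕ) (s x : ℝ) :
    ∫ α in (0:ℝ)..x, gwF M k s α = (M*s)^k/(k.factorial:ℝ)^2 * (x^(k+1)/(k+1)) := by
  unfold gwF
  have h1 : ∀ α : ℝ, (M*s*α)^k / (k.factorial : ℝ)^2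
      = (M*s)^k/(k.factorial:ℝ)^2 * α^k := by
    intro α; rw [mul_pow]; ring
  simp_rw [h1]
  rw [intervalIntegral.integral_const_mul, integral_pow]
  norm_num

lemma gw_Lint (M : ℝ) (k : ℕ) (t x : ℝ) :
    M * ∫ s in (0:ℝ)..t, ∫ α in (0:ℝ)..x, gwF M k s α = gwF M (k+1) t x := by
  simp_rw [gw_inner]
  have h1 : ∀ s : ℝ, (M*s)^k/(k.factorial:ℝ)^2 * (x^(k+1)/(k+1))
      = (M^k/(k.factorial:ℝ)^2 * (x^(k+1)/(k+1))) * s^k := by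
    intro s; rw [mul_pow]; ring
  simp_rw [h1]
  rw [intervalIntegral.integral_const_mul, integral_pow]
  have hk1 : ((k:ℝ)+1) ≠ 0 := by positivity
  have hkf : (k.factorial:ℝ) ≠ 0 := by exact_mod_cast k.factorial_ne_zero
  unfold gwF
  rw [Nat.factorial_succ]
  push_cast
  field_simp
  ring

lemma gwQ_cont1 (M a c : ℝ) (n : ℕ) (s : ℝ) :
    Continuous (fun α => a * ∑ k ∈ Finset.range n, gwF M k s α + c * gwF M n s α) := by
  apply Continuous.add
  · exact continuous_const.mul (continuous_finset_sum _ fun k _ => gwF_cont1 M k s)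
  · exact continuous_const.mul (gwF_cont1 M n s)

lemma gwQ_cont (M a c : ℝ) (n : ℕ) :
    Continuous (fun p : ℝ × ℝ =>
      a * ∑ k ∈ Finset.range n, gwF M k p.1 p.2 + c * gwF M n p.1 p.2) := by
  apply Continuous.add
  · exact continuous_const.mul (continuous_finset_sum _ fun k _ => gwF_cont M k)
  · exact continuous_const.mul (gwF_cont M n)

lemma gw_int_lin (M a c : ℝ) (n : ℕ) (t x : ℝ) :
    ∫ s in (0:ℝ)..t, ∫ α in (0:ℝ)..x,
        (a * ∑ k ∈ Finset.range n, gwF M k s α + c * gwF M n s α)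
      = a * ∑ k ∈ Finset.range n, (∫ s in (0:ℝ)..t, ∫ α in (0:ℝ)..x, gwF M k s α)
        + c * ∫ s in (0:ℝ)..t, ∫ α in (0:ℝ)..x, gwF M n s α := by
  have e1 : ∀ s : ℝ, ∫ α in (0:ℝ)..x,
      (a * ∑ k ∈ Finset.range n, gwF M k s α + c * gwF M n s α)
      = a * ∑ k ∈ Finset.range n, (∫ α in (0:ℝ)..x, gwF M k s α)
        + c * ∫ α in (0:ℝ)..x, gwF M n s α := by
    intro s
    have hsum : IntervalIntegrable (fun α => ∑ k ∈ Finset.range n, gwF M k s α) volume 0 x :=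
      (continuous_finset_sum _ fun k _ => gwF_cont1 M k s).intervalIntegrable 0 x
    rw [intervalIntegral.integral_add (hsum.const_mul a) ((gwF_int_inner M n s x).const_mul c),
      intervalIntegral.integral_const_mul, intervalIntegral.integral_const_mul,
      intervalIntegral.integral_finset_sum (fun k _ => gwF_int_inner M k s x)]
  rw [intervalIntegral.integral_congr (g := fun s =>
    a * ∑ k ∈ Finset.range n, (∫ α in (0:ℝ)..x, gwF M k s α)
      + c * ∫ α in (0:ℝ)..x, gwF M n s α) (fun s _ => e1 s)]
  have hsum2 : IntervalIntegrable
      (fun s => ∑ k ∈ Finset.range n, (∫ α in (0:ℝ)..x, gwF M k s α)) volume 0 t :=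
    (continuous_finset_sum _ fun k _ => gwF_contI M k x).intervalIntegrable 0 t
  rw [intervalIntegral.integral_add (hsum2.const_mul a)
      (((gwF_contI M n x).intervalIntegrable 0 t).const_mul c),
    intervalIntegral.integral_const_mul, intervalIntegral.integral_const_mul,
    intervalIntegral.integral_finset_sum (fun k _ => (gwF_contI M k x).intervalIntegrable 0 t)]

lemma gw_Lsum (M a B : ℝ) (n : ℕ) (t x : ℝ) :
    a + M * ∫ s in (0:ℝ)..t, ∫ α in (0:ℝ)..x,
        (a * ∑ k ∈ Finset.range n, gwF M k s α + B * gwF M n s α)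
      = a * ∑ k ∈ Finset.range (n+1), gwF M k t x + B * gwF M (n+1) t x := by
  rw [gw_int_lin, Finset.sum_range_succ']
  have h1 : ∑ k ∈ Finset.range n, gwF M (k+1) t x
      = ∑ k ∈ Finset.range n, M * ∫ s in (0:ℝ)..t, ∫ α in (0:ℝ)..x, gwF M k s α :=
    Finset.sum_congr rfl fun k _ => (gw_Lint M k t x).symm
  have hF0 : gwF M 0 t x = 1 := by simp [gwF]
  rw [h1, ← gw_Lint M n t x, hF0, ← Finset.mul_sum]
  ring

lemma gw_key (T X a M B : ℝ) (hM : 0 ≤ M) (w : ℝ × ℝ → ℝ)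
    (hwc : Continuous w)
    (hB : ∀ p ∈ Set.Icc (0:ℝ) T ×ˢ Set.Icc (0:ℝ) X, w p ≤ B)
    (hineq' : ∀ t x : ℝ, t ∈ Set.Icc (0:ℝ) T → x ∈ Set.Icc (0:ℝ) X →
      w (t, x) ≤ a + M * ∫ s in (0:ℝ)..t, ∫ α in (0:ℝ)..x, w (s, α)) :
    ∀ (n : ℕ) (t x : ℝ), t ∈ Set.Icc (0:ℝ) T → x ∈ Set.Icc (0:ℝ) X →
      w (t, x) ≤ a * ∑ k ∈ Finset.range n, gwF M k t x + B * gwF M n t x := by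
  intro n
  induction n with
  | zero =>
    intro t x ht hx
    simpa [gwF] using hB (t, x) ⟨ht, hx⟩
  | succ n ih =>
    intro t x ht hx
    have contIw : Continuous (fun s => ∫ α in (0:ℝ)..x, w (s, α)) :=
      continuous_parametric_intervalIntegral_of_continuous
        (f := fun s α => w (s, α)) hwc continuous_const
    have contQ : Continuous (fun s => ∫ α in (0:ℝ)..x,
        (a * ∑ k ∈ Finset.range n, gwF M k s α + B * gwF M n s α)) :=
      continuous_parametric_intervalIntegral_of_continuous
        (f := fun s α => a * ∑ k ∈ Finset.range n, gwF M k s α + B * gwF M n s α)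
        (gwQ_cont M a B n) continuous_const
    have mono : (∫ s in (0:ℝ)..t, ∫ α in (0:ℝ)..x, w (s, α))
        ≤ ∫ s in (0:ℝ)..t, ∫ α in (0:ℝ)..x,
            (a * ∑ k ∈ Finset.range n, gwF M k s α + B * gwF M n s α) := by
      apply intervalIntegral.integral_mono_on ht.1
        (contIw.intervalIntegrable 0 t) (contQ.intervalIntegrable 0 t)
      intro s hs
      apply intervalIntegral.integral_mono_on hx.1
        ((hwc.comp (Continuous.prodMk_right s)).intervalIntegrable 0 x)
        ((gwQ_cont1 M a B n s).intervalIntegrable 0 x)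
      intro α hα
      exact ih s α ⟨hs.1, hs.2.trans ht.2⟩ ⟨hα.1, hα.2.trans hx.2⟩
    calc w (t, x) ≤ a + M * ∫ s in (0:ℝ)..t, ∫ α in (0:ℝ)..x, w (s, α) :=
          hineq' t x ht hx
      _ ≤ a + M * ∫ s in (0:ℝ)..t, ∫ α in (0:ℝ)..x,
            (a * ∑ k ∈ Finset.range n, gwF M k s α + B * gwF M n s α) :=
          add_le_add (le_refl a) (mul_le_mul_of_nonneg_left mono hM)
      _ = a * ∑ k ∈ Finset.range (n+1), gwF M k t x + B * gwF M (n+1) t x :=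
          gw_Lsum M a B n t x

/-- Two-parameter Gronwall inequality: if a continuous nonnegative `v` on
`[0,T] × [0,X]` satisfies `v(t,x) ≤ a + M ∫₀ᵗ∫₀ˣ v(s,α) dα ds`, then
`v(t,x) ≤ a · Σₙ (M·t·x)ⁿ/(n!)²`. -/
theorem two_parameter_gronwall
    (T X a M : ℝ) (hT : 0 < T) (hX : 0 < X) (ha : 0 ≤ a) (hM : 0 ≤ M)
    (v : ℝ × ℝ → ℝ)
    (hcont : ContinuousOn v (Set.Icc 0 T ×ˢ Set.Icc 0 X))
    (hnonneg : ∀ p ∈ Set.Icc (0:ℝ) T ×ˢ Set.Icc (0:ℝ) X, 0 ≤ v p)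
    (hineq : ∀ t x : ℝ, t ∈ Set.Icc (0:ℝ) T → x ∈ Set.Icc (0:ℝ) X →
      v (t, x) ≤ a + M * ∫ s in (0:ℝ)..t, ∫ α in (0:ℝ)..x, v (s, α)) :
    ∀ t x : ℝ, t ∈ Set.Icc (0:ℝ) T → x ∈ Set.Icc (0:ℝ) X →
      v (t, x) ≤ a * ∑' n : ℕ, (M * t * x) ^ n / (n.factorial : ℝ) ^ 2 := by
  set w : ℝ × ℝ → ℝ := fun p => v (max 0 (min p.1 T), max 0 (min p.2 X)) with hw
  have hmemS : ∀ p : ℝ × ℝ, (max 0 (min p.1 T), max 0 (min p.2 X)) ∈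
      Set.Icc (0:ℝ) T ×ˢ Set.Icc (0:ℝ) X := fun p =>
    ⟨⟨le_max_left _ _, max_le hT.le (min_le_right _ _)⟩,
     ⟨le_max_left _ _, max_le hX.le (min_le_right _ _)⟩⟩
  have hwc : Continuous w := by
    apply hcont.comp_continuous _ hmemS
    fun_prop
  have hweq : ∀ t x : ℝ, t ∈ Set.Icc (0:ℝ) T → x ∈ Set.Icc (0:ℝ) X →
      w (t, x) = v (t, x) := by
    intro t x ht hx
    simp only [hw, min_eq_left ht.2, max_eq_right ht.1, min_eq_left hx.2, max_eq_right hx.1]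
  obtain ⟨p0, hp0, hp0max⟩ := ((isCompact_Icc (a := (0:ℝ)) (b := T)).prod
      (isCompact_Icc (a := (0:ℝ)) (b := X))).exists_isMaxOn
    ⟨((0:ℝ),(0:ℝ)), ⟨⟨le_refl _, hT.le⟩, ⟨le_refl _, hX.le⟩⟩⟩ hwc.continuousOn
  rw [isMaxOn_iff] at hp0max
  set B : ℝ := w p0 with hB
  have hineq' : ∀ t x : ℝ, t ∈ Set.Icc (0:ℝ) T → x ∈ Set.Icc (0:ℝ) X →
      w (t, x) ≤ a + M * ∫ s in (0:ℝ)..t, ∫ α in (0:ℝ)..x, w (s, α) := by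
    intro t x ht hx
    rw [hweq t x ht hx]
    refine (hineq t x ht hx).trans (le_of_eq ?_)
    congr 1
    congr 1
    apply intervalIntegral.integral_congr
    intro s hs
    rw [Set.uIcc_of_le ht.1] at hs
    apply intervalIntegral.integral_congr
    intro α hα
    rw [Set.uIcc_of_le hx.1] at hα
    exact (hweq s α ⟨hs.1, hs.2.trans ht.2⟩ ⟨hα.1, hα.2.trans hx.2⟩).symm
  have key := gw_key T X a M B hM w hwc (fun p hp => hp0max p hp) hineq'
  intro t x ht hx
  have hc : (0:ℝ) ≤ M * t * x := by
    have := ht.1; have := hx.1; positivity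
  have hsum : Summable (fun n : ℕ => (M*t*x)^n/(n.factorial:ℝ)^2) := by
    apply Summable.of_nonneg_of_le (fun n => by positivity) ?_
      (Real.summable_pow_div_factorial (M*t*x))
    intro n
    have h1 : (1:ℝ) ≤ (n.factorial:ℝ) := by exact_mod_cast n.factorial_pos
    apply div_le_div_of_nonneg_left (by positivity) (by positivity)
    nlinarith
  have htend : Filter.Tendsto
      (fun n : ℕ => a * ∑ k ∈ Finset.range n, gwF M k t x + B * gwF M n t x)
      Filter.atTop (nhds (a * ∑' n : ℕ, (M * t * x) ^ n / (n.factorial : ℝ) ^ 2 + B * 0)) := by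
    apply Filter.Tendsto.add
    · exact (hsum.hasSum.tendsto_sum_nat).const_mul a
    · exact (hsum.tendsto_atTop_zero).const_mul B
  rw [← hweq t x ht hx]
  have hle := ge_of_tendsto' htend (fun n => key n t x ht hx)
  simpa using hle
end

section
/- Let h : ℝ≥0 × ℝ≥0 → ℝ be continuous and bounded, let y₀ ∈ ℝ, and let y(t,x) := y₀ · Σ_{n=0}^∞ Jₙh(t,x). Then y satisfies the boundary conditions y(0,x) = y(t,0) = y₀ for all t, x ≥ 0, and y solves the hyperbolic PDE ∂²y/∂t∂x = h·y in the following sense: for every (t,x) with t, x > 0, the partial derivative ∂y/∂x(t,x) exists, and the map t' ↦ ∂y/∂x(t',x) is differentiable at t with derivative equal to h(t,x) · y(t,x). -/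
open MeasureTheory intervalIntegral

theorem Jcont (H : ℝ × ℝ → ℝ) (hH : Continuous H) : ∀ n, Continuous (J H n) := by
  intro n
  induction n with
  | zero => exact continuous_const
  | succ n ih =>
      show Continuous fun p : ℝ × ℝ => ∫ s in (0:ℝ)..p.1,
        (fun q : (ℝ × ℝ) × ℝ => ∫ a in (0:ℝ)..q.1.2, H (q.2, a) * J H n (q.2, a)) (p, s)
      apply continuous_parametric_intervalIntegral_of_continuous (μ := volume)
        (f := fun p s => (fun q : (ℝ × ℝ) × ℝ =>
          ∫ a in (0:ℝ)..q.1.2, H (q.2, a) * J H n (q.2, a)) (p, s))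
        ?_ continuous_fst
      show Continuous fun q : (ℝ × ℝ) × ℝ => ∫ a in (0:ℝ)..q.1.2,
        (fun w a => H (w.2, a) * J H n (w.2, a)) q a
      apply continuous_parametric_intervalIntegral_of_continuous (μ := volume)
      · apply Continuous.mul
        · exact hH.comp (by fun_prop)
        · exact (ih).comp (by fun_prop)
      · fun_prop

theorem Jbound (H : ℝ × ℝ → ℝ) (M : ℝ) (hM : ∀ p, |H p| ≤ M) :
    ∀ n, ∀ t x : ℝ, 0 ≤ t → 0 ≤ x →
      |J H n (t, x)| ≤ (M * t * x) ^ n / n.factorial := by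
  have hM0 : 0 ≤ M := (abs_nonneg _).trans (hM (0, 0))
  intro n
  induction n with
  | zero => intro t x ht hx; simp [J]
  | succ n ih =>
      intro t x ht hx
      have hinner : ∀ s : ℝ, 0 ≤ s →
          |∫ a in (0:ℝ)..x, H (s, a) * J H n (s, a)| ≤
            (M * (M * s) ^ n / n.factorial) * (x ^ (n + 1) / (n + 1)) := by
        intro s hs
        have hC0 : 0 ≤ M * (M * s) ^ n / n.factorial := by
          apply div_nonneg _ (by positivity)
          exact mul_nonneg hM0 (pow_nonneg (mul_nonneg hM0 hs) n)
        have hle : ∀ a ∈ Set.uIoc (0:ℝ) x,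
            ‖H (s, a) * J H n (s, a)‖ ≤ (M * (M * s) ^ n / n.factorial) * a ^ n := by
          intro a ha
          rw [Set.uIoc_of_le hx] at ha
          have ha0 : 0 ≤ a := ha.1.le
          have := ih s a hs ha0
          calc ‖H (s, a) * J H n (s, a)‖ = |H (s, a)| * |J H n (s, a)| := abs_mul _ _
            _ ≤ M * ((M * s * a) ^ n / n.factorial) := by
                apply mul_le_mul (hM _) this (abs_nonneg _) hM0
            _ = (M * (M * s) ^ n / n.factorial) * a ^ n := by
                rw [mul_pow]; ring
        have hbint : IntervalIntegrable
            (fun a : ℝ => (M * (M * s) ^ n / n.factorial) * a ^ n) volume 0 x := by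
          apply Continuous.intervalIntegrable; fun_prop
        have := intervalIntegral.norm_integral_le_abs_of_norm_le
          (f := fun a => H (s, a) * J H n (s, a))
          (g := fun a : ℝ => (M * (M * s) ^ n / n.factorial) * a ^ n)
          (ae_restrict_of_forall_mem measurableSet_uIoc hle) hbint
        refine this.trans ?_
        rw [intervalIntegral.integral_const_mul, integral_pow]
        rw [abs_of_nonneg (by
          apply mul_nonneg hC0
          apply div_nonneg _ (by positivity)
          simp [pow_nonneg hx])]
        simp
      have houter : ∀ s ∈ Set.uIoc (0:ℝ) t,
          ‖∫ a in (0:ℝ)..x, H (s, a) * J H n (s, a)‖ ≤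
            (M ^ (n+1) * (x ^ (n + 1) / (n + 1)) / n.factorial) * s ^ n := by
        intro s hs
        rw [Set.uIoc_of_le ht] at hs
        refine (hinner s hs.1.le).trans_eq ?_
        rw [mul_pow]; ring
      have hbint : IntervalIntegrable
          (fun s : ℝ => (M ^ (n+1) * (x ^ (n + 1) / (n + 1)) / n.factorial) * s ^ n)
          volume 0 t := by apply Continuous.intervalIntegrable; fun_prop
      have hstep := intervalIntegral.norm_integral_le_abs_of_norm_le
        (f := fun s => ∫ a in (0:ℝ)..x, H (s, a) * J H n (s, a))
        (g := fun s : ℝ => (M ^ (n+1) * (x ^ (n + 1) / (n + 1)) / n.factorial) * s ^ n)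
        (ae_restrict_of_forall_mem measurableSet_uIoc houter) hbint
      show |∫ s in (0:ℝ)..t, ∫ a in (0:ℝ)..x, H (s, a) * J H n (s, a)| ≤ _
      refine hstep.trans ?_
      rw [intervalIntegral.integral_const_mul, integral_pow]
      have hC0 : 0 ≤ M ^ (n+1) * (x ^ (n + 1) / (n + 1)) / n.factorial := by
        apply div_nonneg _ (by positivity)
        apply mul_nonneg (pow_nonneg hM0 _)
        apply div_nonneg (pow_nonneg hx _) (by positivity)
      rw [abs_of_nonneg (by
        apply mul_nonneg hC0
        apply div_nonneg _ (by positivity)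
        simp [pow_nonneg ht])]
      have hfac : ((n+1 : ℕ).factorial : ℝ) = (n.factorial : ℝ) * (n + 1) := by
        push_cast [Nat.factorial_succ]; ring
      rw [hfac, mul_pow, mul_pow]
      have key : M ^ (n+1) * (x^(n+1)/(n+1)) / n.factorial * ((t^(n+1) - 0^(n+1))/(n+1))
          = (M^(n+1)*t^(n+1)*x^(n+1)/((n.factorial:ℝ)*((n:ℝ)+1))) * (1/((n:ℝ)+1)) := by
        rw [zero_pow (Nat.succ_ne_zero n)]
        have h1 : ((n.factorial : ℝ)) ≠ 0 := by positivity
        have h2 : ((n:ℝ)+1) ≠ 0 := by positivity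
        field_simp
        ring
      rw [key]
      have hP : 0 ≤ M^(n+1)*t^(n+1)*x^(n+1)/((n.factorial:ℝ)*((n:ℝ)+1)) := by
        apply div_nonneg _ (by positivity)
        exact mul_nonneg (mul_nonneg (pow_nonneg hM0 _) (pow_nonneg ht _)) (pow_nonneg hx _)
      have hone : 1/((n:ℝ)+1) ≤ 1 := by
        rw [div_le_one (by positivity)]
        have : (0:ℝ) ≤ n := Nat.cast_nonneg n
        linarith
      calc _ ≤ (M^(n+1)*t^(n+1)*x^(n+1)/((n.factorial:ℝ)*((n:ℝ)+1))) * 1 :=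
            mul_le_mul_of_nonneg_left hone hP
        _ = M ^ (n+1) * t ^ (n+1) * x ^ (n+1) / ((n.factorial:ℝ)*((n:ℝ)+1)) := mul_one _

theorem Jswap (H : ℝ × ℝ → ℝ) (hH : Continuous H)
    (n : ℕ) (t x : ℝ) (ht : 0 ≤ t) (hx : 0 ≤ x) :
    J H (n+1) (t, x) = ∫ a in (0:ℝ)..x, ∫ s in (0:ℝ)..t, H (s, a) * J H n (s, a) := by
  have hJc := Jcont H hH
  have hFc : Continuous fun p : ℝ × ℝ => H p * J H n p := hH.mul (hJc n)
  have hint : Integrable (Function.uncurry fun s a => H (s, a) * J H n (s, a))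
      ((volume.restrict (Set.Ioc (0:ℝ) t)).prod (volume.restrict (Set.Ioc (0:ℝ) x))) := by
    rw [Measure.prod_restrict]
    have : IntegrableOn (fun p : ℝ × ℝ => H p * J H n p)
        (Set.Icc (0:ℝ) t ×ˢ Set.Icc (0:ℝ) x) volume :=
      hFc.continuousOn.integrableOn_compact (isCompact_Icc.prod isCompact_Icc)
    have h2 : IntegrableOn (fun p : ℝ × ℝ => H p * J H n p)
        (Set.Ioc (0:ℝ) t ×ˢ Set.Ioc (0:ℝ) x) volume :=
      this.mono_set (Set.prod_mono Set.Ioc_subset_Icc_self Set.Ioc_subset_Icc_self)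
    rw [← Measure.volume_eq_prod]
    exact h2
  show ∫ s in (0:ℝ)..t, ∫ a in (0:ℝ)..x, H (s, a) * J H n (s, a) = _
  rw [intervalIntegral.integral_of_le ht, intervalIntegral.integral_of_le hx]
  simp only [intervalIntegral.integral_of_le ht, intervalIntegral.integral_of_le hx]
  exact integral_integral_swap hint

theorem JsummableAux (r : ℝ) : Summable fun n : ℕ => r ^ n / n.factorial :=
  Real.summable_pow_div_factorial r

theorem Jsummable (H : ℝ × ℝ → ℝ) (M : ℝ) (hM : ∀ p, |H p| ≤ M)
    (t x : ℝ) (ht : 0 ≤ t) (hx : 0 ≤ x) : Summable fun n => J H n (t, x) := by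
  apply Summable.of_norm_bounded (JsummableAux (M * t * x))
  intro n
  rw [Real.norm_eq_abs]
  exact Jbound H M hM n t x ht hx

theorem JderivX (H : ℝ × ℝ → ℝ) (hH : Continuous H) (n : ℕ) (t : ℝ) (ht : 0 ≤ t)
    (x : ℝ) (hx : 0 < x) :
    HasDerivAt (fun z => J H (n+1) (t, z))
      (∫ s in (0:ℝ)..t, H (s, x) * J H n (s, x)) x := by
  have hJc := Jcont H hH
  set G : ℝ → ℝ := fun a => ∫ s in (0:ℝ)..t, H (s, a) * J H n (s, a) with hG
  have hGc : Continuous G := by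
    apply continuous_parametric_intervalIntegral_of_continuous' (μ := volume)
      (f := fun a s => H (s, a) * J H n (s, a))
    apply Continuous.mul
    · exact hH.comp (by fun_prop)
    · exact (hJc n).comp (by fun_prop)
  have hftc : HasDerivAt (fun u => ∫ a in (0:ℝ)..u, G a) (G x) x :=
    intervalIntegral.integral_hasDerivAt_right (hGc.intervalIntegrable 0 x)
      (hGc.stronglyMeasurableAtFilter _ _) hGc.continuousAt
  apply hftc.congr_of_eventuallyEq
  filter_upwards [Ioi_mem_nhds hx] with z hz
  exact Jswap H hH n t z ht (le_of_lt hz)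

theorem sumJderivX (H : ℝ × ℝ → ℝ) (M : ℝ) (hH : Continuous H) (hM : ∀ p, |H p| ≤ M)
    (t : ℝ) (ht : 0 ≤ t) (x : ℝ) (hx : 0 < x) :
    HasDerivAt (fun z => ∑' n, J H n (t, z))
      (∑' m, ∫ s in (0:ℝ)..t, H (s, x) * J H m (s, x)) x := by
  have hJb := Jbound H M hM
  have hM0 : 0 ≤ M := (abs_nonneg _).trans (hM (0, 0))
  set R : ℝ := x + 1 with hR
  set u : ℕ → ℝ := fun n => Nat.rec 0 (fun m _ => (M * ((M*t*R)^m/m.factorial)) * t) n with hu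
  set g' : ℕ → ℝ → ℝ := fun n z =>
    Nat.rec 0 (fun m _ => ∫ s in (0:ℝ)..t, H (s, z) * J H m (s, z)) n with hg'def
  have hR0 : 0 ≤ R := by positivity
  have hus : Summable u := by
    rw [← summable_nat_add_iff 1]
    exact ((JsummableAux (M*t*R)).mul_left M).mul_right t
  have hgbd : ∀ n z, z ∈ Set.Ioo (0:ℝ) R → ‖g' n z‖ ≤ u n := by
    rintro (_ | m) z hz
    · simp [hg'def, hu]
    · show ‖∫ s in (0:ℝ)..t, H (s, z) * J H m (s, z)‖ ≤ (M * ((M*t*R)^m/m.factorial)) * t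
      have hb : ∀ s ∈ Set.uIoc (0:ℝ) t,
          ‖H (s, z) * J H m (s, z)‖ ≤ M * ((M*t*R)^m/m.factorial) := by
        intro s hs
        rw [Set.uIoc_of_le ht] at hs
        calc ‖H (s, z) * J H m (s, z)‖ = |H (s, z)| * |J H m (s, z)| := abs_mul _ _
          _ ≤ M * ((M*s*z)^m/m.factorial) :=
              mul_le_mul (hM _) (hJb m s z hs.1.le hz.1.le) (abs_nonneg _) hM0
          _ ≤ M * ((M*t*R)^m/m.factorial) := by
              have h1 : 0 ≤ M*s*z := mul_nonneg (mul_nonneg hM0 hs.1.le) hz.1.le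
              have h2 : M*s*z ≤ M*t*R :=
                mul_le_mul (mul_le_mul_of_nonneg_left hs.2 hM0) hz.2.le hz.1.le
                  (mul_nonneg hM0 ht)
              have := pow_le_pow_left₀ h1 h2 m
              apply mul_le_mul_of_nonneg_left _ hM0
              apply div_le_div_of_nonneg_right ?hh ?pos
              case hh => exact this
              case pos => positivity
      calc ‖∫ s in (0:ℝ)..t, H (s, z) * J H m (s, z)‖
          ≤ (M * ((M*t*R)^m/m.factorial)) * |t - 0| :=
            intervalIntegral.norm_integral_le_of_norm_le_const hb
        _ = (M * ((M*t*R)^m/m.factorial)) * t := by rw [sub_zero, abs_of_nonneg ht]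
  have hgd : ∀ n z, z ∈ Set.Ioo (0:ℝ) R →
      HasDerivAt (fun w => J H n (t, w)) (g' n z) z := by
    rintro (_ | m) z hz
    · exact hasDerivAt_const z 1
    · exact JderivX H hH m t ht z hz.1
  have hx' : x ∈ Set.Ioo (0:ℝ) R := ⟨hx, by simp [hR]⟩
  have hsum0 : Summable fun n => J H n (t, x) := Jsummable H M hM t x ht hx.le
  have main := hasDerivAt_tsum_of_isPreconnected hus isOpen_Ioo
    isPreconnected_Ioo hgd hgbd hx' hsum0 hx'
  have hshift : (∑' n, g' n x) = ∑' m, ∫ s in (0:ℝ)..t, H (s, x) * J H m (s, x) := by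
    have hs : Summable fun n => g' n x :=
      Summable.of_norm_bounded hus fun n => hgbd n x hx'
    rw [Summable.tsum_eq_zero_add hs]
    simp [hg'def]
  rw [hshift] at main
  exact main

theorem Jagree (h H : ℝ × ℝ → ℝ) (hag : ∀ s a : ℝ, 0 ≤ s → 0 ≤ a → h (s, a) = H (s, a)) :
    ∀ n, ∀ t x : ℝ, 0 ≤ t → 0 ≤ x → J h n (t, x) = J H n (t, x) := by
  intro n
  induction n with
  | zero => intro t x _ _; rfl
  | succ n ih =>
      intro t x ht hx
      show (∫ s in (0:ℝ)..t, ∫ a in (0:ℝ)..x, h (s, a) * J h n (s, a))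
        = ∫ s in (0:ℝ)..t, ∫ a in (0:ℝ)..x, H (s, a) * J H n (s, a)
      apply intervalIntegral.integral_congr
      intro s hs
      rw [Set.uIcc_of_le ht] at hs
      apply intervalIntegral.integral_congr
      intro a ha
      rw [Set.uIcc_of_le hx] at ha
      simp only
      rw [hag s a hs.1 ha.1, ih s a hs.1 ha.1]

theorem sumDt (H : ℝ × ℝ → ℝ) (M : ℝ) (hH : Continuous H) (hM : ∀ p, |H p| ≤ M)
    (x : ℝ) (hx : 0 ≤ x) (t : ℝ) (ht : 0 < t) :
    HasDerivAt (fun t' => ∑' m, ∫ s in (0:ℝ)..t', H (s, x) * J H m (s, x))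
      (H (t, x) * ∑' n, J H n (t, x)) t := by
  have hJc := Jcont H hH
  have hJb := Jbound H M hM
  have hM0 : 0 ≤ M := (abs_nonneg _).trans (hM (0, 0))
  set T : ℝ := t + 1 with hT
  have hT0 : 0 ≤ T := by positivity
  set ψ : ℕ → ℝ → ℝ := fun m s => H (s, x) * J H m (s, x) with hψ
  have hψc : ∀ m, Continuous (ψ m) := by
    intro m
    apply Continuous.mul
    · exact hH.comp (by fun_prop)
    · exact (hJc m).comp (by fun_prop)
  set u : ℕ → ℝ := fun m => M * ((M*T*x)^m / m.factorial) with hu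
  have hus : Summable u := (JsummableAux (M*T*x)).mul_left M
  have hψbd : ∀ m s, 0 ≤ s → s ≤ T → ‖ψ m s‖ ≤ u m := by
    intro m s hs0 hsT
    calc ‖ψ m s‖ = |H (s, x)| * |J H m (s, x)| := abs_mul _ _
      _ ≤ M * ((M*s*x)^m/m.factorial) :=
          mul_le_mul (hM _) (hJb m s x hs0 hx) (abs_nonneg _) hM0
      _ ≤ u m := by
          apply mul_le_mul_of_nonneg_left _ hM0
          have h1 : 0 ≤ M*s*x := mul_nonneg (mul_nonneg hM0 hs0) hx
          have h2 : M*s*x ≤ M*T*x :=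
            mul_le_mul_of_nonneg_right (mul_le_mul_of_nonneg_left hsT hM0) hx
          exact div_le_div_of_nonneg_right (pow_le_pow_left₀ h1 h2 m) (by positivity)
  have hgd : ∀ m t', t' ∈ Set.Ioo (0:ℝ) T →
      HasDerivAt (fun w => ∫ s in (0:ℝ)..w, ψ m s) (ψ m t') t' := by
    intro m t' _
    exact intervalIntegral.integral_hasDerivAt_right ((hψc m).intervalIntegrable 0 t')
      ((hψc m).stronglyMeasurableAtFilter _ _) (hψc m).continuousAt
  have hgbd : ∀ m t', t' ∈ Set.Ioo (0:ℝ) T → ‖ψ m t'‖ ≤ u m := by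
    intro m t' ht'
    exact hψbd m t' ht'.1.le ht'.2.le
  have htmem : t ∈ Set.Ioo (0:ℝ) T := ⟨ht, by simp [hT]⟩
  have hg0 : Summable fun m => ∫ s in (0:ℝ)..t, ψ m s := by
    apply Summable.of_norm_bounded (hus.mul_right t)
    intro m
    calc ‖∫ s in (0:ℝ)..t, ψ m s‖ ≤ u m * |t - 0| := by
          apply intervalIntegral.norm_integral_le_of_norm_le_const
          intro s hs
          rw [Set.uIoc_of_le ht.le] at hs
          exact hψbd m s hs.1.le (hs.2.trans (by rw [hT]; linarith))
      _ = u m * t := by rw [sub_zero, abs_of_nonneg ht.le]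
  have main := hasDerivAt_tsum_of_isPreconnected hus isOpen_Ioo isPreconnected_Ioo
    hgd hgbd htmem hg0 htmem
  have : (∑' m, ψ m t) = H (t, x) * ∑' n, J H n (t, x) := by
    simp only [hψ]
    exact tsum_mul_left
  rw [this] at main
  exact main

/-- For continuous bounded `h`, the function `y(t,x) := y₀ · Σₙ Jₙh(t,x)` satisfies the
boundary conditions `y(0,x) = y(t,0) = y₀` and solves the hyperbolic PDE
`∂²y/∂t∂x = h·y`: for `t, x > 0` the partial derivative `∂y/∂x(t,x)` exists, and
`t' ↦ ∂y/∂x(t',x)` is differentiable at `t` with derivative `h(t,x)·y(t,x)`. -/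
theorem volterra_series_solves_pde
    (h : ℝ × ℝ → ℝ) (M : ℝ)
    (hcont : ContinuousOn h (Set.Ici (0:ℝ) ×ˢ Set.Ici (0:ℝ)))
    (hbd : ∀ s a : ℝ, 0 ≤ s → 0 ≤ a → |h (s, a)| ≤ M) (y₀ : ℝ) :
    (∀ x : ℝ, 0 ≤ x → y₀ * ∑' n : ℕ, J h n (0, x) = y₀) ∧
    (∀ t : ℝ, 0 ≤ t → y₀ * ∑' n : ℕ, J h n (t, 0) = y₀) ∧
    (∀ t x : ℝ, 0 < t → 0 < x →
      DifferentiableAt ℝ (fun x' : ℝ => y₀ * ∑' n : ℕ, J h n (t, x')) x ∧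
      HasDerivAt (fun t' : ℝ => deriv (fun x' : ℝ => y₀ * ∑' n : ℕ, J h n (t', x')) x)
        (h (t, x) * (y₀ * ∑' n : ℕ, J h n (t, x))) t) := by
  set H : ℝ × ℝ → ℝ := fun p => h (max p.1 0, max p.2 0) with hHdef
  have hHc : Continuous H :=
    hcont.comp_continuous (by fun_prop) (fun p => ⟨Set.mem_Ici.mpr (le_max_right _ _), Set.mem_Ici.mpr (le_max_right _ _)⟩)
  have hHM : ∀ p, |H p| ≤ M := fun p => hbd _ _ (le_max_right _ _) (le_max_right _ _)
  have hag : ∀ s a : ℝ, 0 ≤ s → 0 ≤ a → h (s, a) = H (s, a) := by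
    intro s a hs ha
    simp [hHdef, max_eq_left hs, max_eq_left ha]
  refine ⟨?_, ?_, ?_⟩
  · intro x hx
    have : (∑' n : ℕ, J h n (0, x)) = 1 := by
      rw [tsum_eq_single 0]
      · rfl
      · rintro (_ | m) hn
        · exact absurd rfl hn
        · show (∫ s in (0:ℝ)..(0:ℝ), ∫ a in (0:ℝ)..x, h (s, a) * J h m (s, a)) = 0
          exact intervalIntegral.integral_same
    rw [this, mul_one]
  · intro t ht
    have : (∑' n : ℕ, J h n (t, 0)) = 1 := by
      rw [tsum_eq_single 0]
      · rfl
      · rintro (_ | m) hn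
        · exact absurd rfl hn
        · show (∫ s in (0:ℝ)..t, ∫ a in (0:ℝ)..(0:ℝ), h (s, a) * J h m (s, a)) = 0
          simp [intervalIntegral.integral_same]
    rw [this, mul_one]
  · intro t x ht hx
    have hs1 : ∀ t' : ℝ, 0 < t' →
        HasDerivAt (fun x' : ℝ => y₀ * ∑' n : ℕ, J h n (t', x'))
          (y₀ * ∑' m : ℕ, ∫ s in (0:ℝ)..t', H (s, x) * J H m (s, x)) x := by
      intro t' ht'
      have base := (sumJderivX H M hHc hHM t' ht'.le x hx).const_mul y₀
      apply base.congr_of_eventuallyEq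
      filter_upwards [Ioi_mem_nhds hx] with z hz
      congr 1
      exact tsum_congr fun n => Jagree h H hag n t' z ht'.le (le_of_lt hz)
    refine ⟨(hs1 t ht).differentiableAt, ?_⟩
    have main := (sumDt H M hHc hHM x hx.le t ht).const_mul y₀
    have main2 := main.congr_of_eventuallyEq (f₁ := fun t' : ℝ =>
        deriv (fun x' : ℝ => y₀ * ∑' n : ℕ, J h n (t', x')) x) ?_
    · have hval : h (t, x) * (y₀ * ∑' n : ℕ, J h n (t, x))
          = y₀ * (H (t, x) * ∑' n : ℕ, J H n (t, x)) := by
        rw [hag t x ht.le hx.le,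
          tsum_congr fun n => Jagree h H hag n t x ht.le hx.le]
        ring
      rw [hval]
      exact main2
    · filter_upwards [Ioi_mem_nhds ht] with t' ht'
      exact (hs1 t' ht').deriv
end

section
/- Let F : ℝ≥0 × ℝ≥0 → ℝ be continuous and bounded, let m₀ ∈ ℝ, and let m : ℝ≥0 × ℝ≥0 → ℝ be a continuous function satisfying m(t,x) = m₀ + ∫₀ᵗ∫₀ˣ F(s,a) · m(s,a) da ds for all t, x ≥ 0. Then for every (t,x) with t, x > 0, the mixed second partial derivative of m² exists at (t,x) and equals ∂²(m²)/∂t∂x (t,x) = 2·F(t,x)·m(t,x)² + 2·(∫₀ˣ F(t,a)·m(t,a) da)·(∫₀ᵗ F(s,x)·m(s,x) ds). -/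
open MeasureTheory intervalIntegral

/-- If `F` is continuous and bounded on the nonnegative quadrant and the continuous
function `m` satisfies `m(t,x) = m₀ + ∫₀ᵗ∫₀ˣ F(s,a)·m(s,a) da ds`, then for `t, x > 0`
the mixed second partial derivative of `m²` exists at `(t,x)` and equals
`2·F(t,x)·m(t,x)² + 2·(∫₀ˣ F(t,a)·m(t,a) da)·(∫₀ᵗ F(s,x)·m(s,x) ds)`. -/
theorem mixed_partial_of_square_of_volterra_solution
    (F : ℝ × ℝ → ℝ) (M : ℝ)
    (hFcont : ContinuousOn F (Set.Ici (0:ℝ) ×ˢ Set.Ici (0:ℝ)))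
    (hFbd : ∀ s a : ℝ, 0 ≤ s → 0 ≤ a → |F (s, a)| ≤ M)
    (m₀ : ℝ) (m : ℝ × ℝ → ℝ)
    (hmcont : ContinuousOn m (Set.Ici (0:ℝ) ×ˢ Set.Ici (0:ℝ)))
    (hm : ∀ t x : ℝ, 0 ≤ t → 0 ≤ x →
      m (t, x) = m₀ + ∫ s in (0:ℝ)..t, ∫ a in (0:ℝ)..x, F (s, a) * m (s, a)) :
    ∀ t x : ℝ, 0 < t → 0 < x →
      DifferentiableAt ℝ (fun x' : ℝ => (m (t, x')) ^ 2) x ∧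
      HasDerivAt (fun t' : ℝ => deriv (fun x' : ℝ => (m (t', x')) ^ 2) x)
        (2 * F (t, x) * (m (t, x)) ^ 2
          + 2 * (∫ a in (0:ℝ)..x, F (t, a) * m (t, a))
              * (∫ s in (0:ℝ)..t, F (s, x) * m (s, x))) t := by
  intro t x ht hx
  -- globally continuous extension of F·m
  have hπc : Continuous (fun q : ℝ × ℝ => ((max q.1 0, max q.2 0) : ℝ × ℝ)) := by fun_prop
  have hπmem : ∀ q : ℝ × ℝ, ((max q.1 0, max q.2 0) : ℝ × ℝ) ∈ Set.Ici (0:ℝ) ×ˢ Set.Ici (0:ℝ) :=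
    fun q => ⟨Set.mem_Ici.mpr (le_max_right q.1 0), Set.mem_Ici.mpr (le_max_right q.2 0)⟩
  set G : ℝ × ℝ → ℝ :=
    fun q => F (max q.1 0, max q.2 0) * m (max q.1 0, max q.2 0) with hGdef
  have hGc : Continuous G :=
    (hFcont.comp_continuous hπc hπmem).mul (hmcont.comp_continuous hπc hπmem)
  have hGeq : ∀ s a : ℝ, 0 ≤ s → 0 ≤ a → G (s, a) = F (s, a) * m (s, a) := by
    intro s a hs ha
    simp only [hGdef, max_eq_left hs, max_eq_left ha]
  -- rewriting the inner integral
  have hinner : ∀ s x' : ℝ, 0 ≤ s → 0 ≤ x' →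
      (∫ a in (0:ℝ)..x', F (s, a) * m (s, a)) = ∫ a in (0:ℝ)..x', G (s, a) := by
    intro s x' hs hx'
    refine intervalIntegral.integral_congr fun a ha => ?_
    rw [Set.uIcc_of_le hx'] at ha
    exact (hGeq s a hs ha.1).symm
  have hinner2 : ∀ x' t' : ℝ, 0 ≤ x' → 0 ≤ t' →
      (∫ s in (0:ℝ)..t', F (s, x') * m (s, x')) = ∫ s in (0:ℝ)..t', G (s, x') := by
    intro x' t' hx' ht'
    refine intervalIntegral.integral_congr fun s hs => ?_
    rw [Set.uIcc_of_le ht'] at hs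
    exact (hGeq s x' hs.1 hx').symm
  have hm' : ∀ t' x' : ℝ, 0 ≤ t' → 0 ≤ x' →
      m (t', x') = m₀ + ∫ s in (0:ℝ)..t', ∫ a in (0:ℝ)..x', G (s, a) := by
    intro t' x' ht' hx'
    rw [hm t' x' ht' hx']
    congr 1
    refine intervalIntegral.integral_congr fun s hs => ?_
    rw [Set.uIcc_of_le ht'] at hs
    exact hinner s x' hs.1 hx'
  -- Fubini on rectangles
  have hswap : ∀ t' x' : ℝ, 0 ≤ t' → 0 ≤ x' →
      (∫ s in (0:ℝ)..t', ∫ a in (0:ℝ)..x', G (s, a))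
        = ∫ a in (0:ℝ)..x', ∫ s in (0:ℝ)..t', G (s, a) := by
    intro t' x' ht' hx'
    simp_rw [intervalIntegral.integral_of_le ht', intervalIntegral.integral_of_le hx']
    have hint : IntegrableOn (Function.uncurry fun s a => G (s, a))
        (Set.Ioc 0 t' ×ˢ Set.Ioc 0 x') (volume.prod volume) := by
      have : IntegrableOn G (Set.Icc 0 t' ×ˢ Set.Icc 0 x') (volume.prod volume) :=
        hGc.continuousOn.integrableOn_compact (isCompact_Icc.prod isCompact_Icc)
      exact this.mono_set (Set.prod_mono Set.Ioc_subset_Icc_self Set.Ioc_subset_Icc_self)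
    rw [IntegrableOn, ← Measure.prod_restrict] at hint
    exact MeasureTheory.integral_integral_swap hint
  -- continuity of parameter integrals
  have hKt : ∀ t' : ℝ, Continuous fun a : ℝ => ∫ s in (0:ℝ)..t', G (s, a) := by
    intro t'
    exact intervalIntegral.continuous_parametric_intervalIntegral_of_continuous'
      (f := fun a s => G (s, a)) (hGc.comp continuous_swap) 0 t'
  have hH : Continuous fun s : ℝ => ∫ a in (0:ℝ)..x, G (s, a) := by
    exact intervalIntegral.continuous_parametric_intervalIntegral_of_continuous'
      (f := fun s a => G (s, a)) hGc 0 x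
  -- derivative of m in the second variable
  have hmx : ∀ t' : ℝ, 0 ≤ t' →
      HasDerivAt (fun y => m (t', y)) (∫ s in (0:ℝ)..t', G (s, x)) x := by
    intro t' ht'
    have h1 : HasDerivAt (fun y => m₀ + ∫ a in (0:ℝ)..y, ∫ s in (0:ℝ)..t', G (s, a))
        (∫ s in (0:ℝ)..t', G (s, x)) x :=
      (((hKt t').integral_hasStrictDerivAt 0 x).hasDerivAt).const_add m₀
    refine h1.congr_of_eventuallyEq ?_
    filter_upwards [Ioi_mem_nhds hx] with y hy
    rw [hm' t' y ht' (le_of_lt hy), hswap t' y ht' (le_of_lt hy)]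
  -- derivative of m in the first variable at t
  have hmt : HasDerivAt (fun s => m (s, x)) (∫ a in (0:ℝ)..x, G (t, a)) t := by
    have h1 : HasDerivAt (fun s => m₀ + ∫ u in (0:ℝ)..s, ∫ a in (0:ℝ)..x, G (u, a))
        (∫ a in (0:ℝ)..x, G (t, a)) t :=
      ((hH.integral_hasStrictDerivAt 0 t).hasDerivAt).const_add m₀
    refine h1.congr_of_eventuallyEq ?_
    filter_upwards [Ioi_mem_nhds ht] with s hs
    exact hm' s x (le_of_lt hs) hx.le
  -- derivative of the square in x
  have hsq : ∀ t' : ℝ, 0 ≤ t' →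
      HasDerivAt (fun y => (m (t', y)) ^ 2)
        (2 * m (t', x) * ∫ s in (0:ℝ)..t', G (s, x)) x := by
    intro t' ht'
    have h := (hmx t' ht').fun_pow 2
    refine h.congr_deriv ?_
    push_cast
    ring
  refine ⟨(hsq t ht.le).differentiableAt, ?_⟩
  -- derivative of t' ↦ ∫ s in 0..t', G (s, x)
  have hA : HasDerivAt (fun t' : ℝ => ∫ s in (0:ℝ)..t', G (s, x)) (G (t, x)) t := by
    have hc : Continuous fun s : ℝ => G (s, x) := hGc.comp (by fun_prop)
    exact (hc.integral_hasStrictDerivAt 0 t).hasDerivAt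
  have hmul : HasDerivAt (fun t' : ℝ => (2 * m (t', x)) * ∫ s in (0:ℝ)..t', G (s, x))
      ((2 * ∫ a in (0:ℝ)..x, G (t, a)) * (∫ s in (0:ℝ)..t, G (s, x))
        + (2 * m (t, x)) * G (t, x)) t :=
    (hmt.const_mul 2).mul hA
  have hfinal : HasDerivAt (fun t' : ℝ => deriv (fun x' : ℝ => (m (t', x')) ^ 2) x)
      ((2 * ∫ a in (0:ℝ)..x, G (t, a)) * (∫ s in (0:ℝ)..t, G (s, x))
        + (2 * m (t, x)) * G (t, x)) t := by
    refine hmul.congr_of_eventuallyEq ?_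
    filter_upwards [Ioi_mem_nhds ht] with s hs
    rw [(hsq s (le_of_lt hs)).deriv]
  convert hfinal using 1
  rw [hGeq t x ht.le hx.le, hinner t x ht.le hx.le, hinner2 x t hx.le ht.le]
  ring
end
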